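/- Fix an integer n ≥ 1, masses m₁, m₂ > 0, exponents γ₁, γ₂ with 1 < γ_i ≤ 2, and constants 0 < λ ≤ Λ. There exists a constant C, depending only on λ, Λ, m₁, m₂, γ₁, γ₂, such that the following holds. Let U = (n₁, n₂, w) : ℝⁿ → ℝ² × ℝⁿ and V = (ν₁, ν₂, ω) : ℝⁿ → ℝ² × ℝⁿ be measurable fields with λ ≤ n₁(x), n₂(x) ≤ Λ for all x, and ν₁(x), ν₂(x) ≥ 0 with ρ(V(x)) > 0 for a.e. x. Define pointwise, for 1 ≤ i ≤ n, the relative flux columns [A(V|U)]_i := ( (n₁/ρ(U) − ν₁/ρ(V)) ρ(V)(u(U)_i − u(V)_i) , (n₂/ρ(U) − ν₂/ρ(V)) ρ(V)(u(U)_i − u(V)_i) , ρ(V)(u(V) − u(U))(u(V)_i − u(U)_i) + (γ₁−1) s₁(ν₁|n₁) e_i + (γ₂−1) s₂(ν₂|n₂) e_i ), and the relative entropy density η(V|U) := (ρ(V)/2)|u(V) − u(U)|² + s₁(ν₁|n₁) + s₂(ν₂|n₂). If ∫_{ℝⁿ} η(V(x)|U(x)) dx < ∞, then ∫_{ℝⁿ}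 Σ_{i=1}^{n} |[A(V(x)|U(x))]_i| dx ≤ C ∫_{ℝⁿ} η(V(x)|U(x)) dx. -/

import Mathlib

open MeasureTheory

/-- The isentropic internal-energy function `s(x) = m^{n(γ−1)/2} x^γ/(γ−1)`. -/
noncomputable def sFn (n : ℕ) (m γ : ℝ) (x : ℝ) : ℝ :=
  m ^ ((n : ℝ) * (γ - 1) / 2) * x ^ γ / (γ - 1)

/-- Its derivative `s′(x) = γ m^{n(γ−1)/2} x^{γ−1}/(γ−1)`. -/
noncomputable def sFn' (n : ℕ) (m γ : ℝ) (x : ℝ) : ℝ :=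
  γ * m ^ ((n : ℝ) * (γ - 1) / 2) * x ^ (γ - 1) / (γ - 1)

/-- The relative quantity `s(y|x) = s(y) − s(x) − s′(x)(y − x)`. -/
noncomputable def sRel (n : ℕ) (m γ : ℝ) (y x : ℝ) : ℝ :=
  sFn n m γ y - sFn n m γ x - sFn' n m γ x * (y - x)

/-- The relative entropy density
`η(V|U) = (ρ(V)/2)|u(V) − u(U)|² + s₁(ν₁|n₁) + s₂(ν₂|n₂)` of the states
`U = (n₁, n₂, w)` and `V = (ν₁, ν₂, ω)`, with `ρ = m₁·(1st) + m₂·(2nd)` and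
`u = (momentum)/ρ`. -/
noncomputable def relEntDens (n : ℕ) (m₁ m₂ γ₁ γ₂ : ℝ) (n₁ n₂ ν₁ ν₂ : ℝ)
    (w ω : EuclideanSpace ℝ (Fin n)) : ℝ :=
  (m₁ * ν₁ + m₂ * ν₂) / 2 *
      ‖(m₁ * ν₁ + m₂ * ν₂)⁻¹ • ω - (m₁ * n₁ + m₂ * n₂)⁻¹ • w‖ ^ 2
    + sRel n m₁ γ₁ ν₁ n₁ + sRel n m₂ γ₂ ν₂ n₂

/-- The `i`-th relative flux column `[A(V|U)]_i`, for `U = (n₁, n₂, w)`,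
`V = (ν₁, ν₂, ω)`, `u(U) = w/ρ(U)`, `u(V) = ω/ρ(V)`:
`((n₁/ρ(U) − ν₁/ρ(V)) ρ(V)(u(U)_i − u(V)_i),
  (n₂/ρ(U) − ν₂/ρ(V)) ρ(V)(u(U)_i − u(V)_i),
  ρ(V)(u(V) − u(U))(u(V)_i − u(U)_i) + (γ₁−1)s₁(ν₁|n₁)e_i + (γ₂−1)s₂(ν₂|n₂)e_i)`. -/
noncomputable def relFluxCol (n : ℕ) (m₁ m₂ γ₁ γ₂ : ℝ) (i : Fin n) (n₁ n₂ ν₁ ν₂ : ℝ)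
    (w ω : EuclideanSpace ℝ (Fin n)) : ℝ × ℝ × EuclideanSpace ℝ (Fin n) :=
  ((n₁ / (m₁ * n₁ + m₂ * n₂) - ν₁ / (m₁ * ν₁ + m₂ * ν₂)) * (m₁ * ν₁ + m₂ * ν₂) *
      (((m₁ * n₁ + m₂ * n₂)⁻¹ • w) i - ((m₁ * ν₁ + m₂ * ν₂)⁻¹ • ω) i),
   (n₂ / (m₁ * n₁ + m₂ * n₂) - ν₂ / (m₁ * ν₁ + m₂ * ν₂)) * (m₁ * ν₁ + m₂ * ν₂) *
      (((m₁ * n₁ + m₂ * n₂)⁻¹ • w) i - ((m₁ * ν₁ + m₂ * ν₂)⁻¹ • ω) i),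
   ((m₁ * ν₁ + m₂ * ν₂) *
        (((m₁ * ν₁ + m₂ * ν₂)⁻¹ • ω) i - ((m₁ * n₁ + m₂ * n₂)⁻¹ • w) i)) •
       ((m₁ * ν₁ + m₂ * ν₂)⁻¹ • ω - (m₁ * n₁ + m₂ * n₂)⁻¹ • w) +
     ((γ₁ - 1) * sRel n m₁ γ₁ ν₁ n₁ + (γ₂ - 1) * sRel n m₂ γ₂ ν₂ n₂) •
       EuclideanSpace.single i 1)

/-- The Euclidean norm `√(a² + b² + |z|²)` of a triple `(a, b, z) ∈ ℝ × ℝ × ℝⁿ`. -/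
noncomputable def tripNorm {n : ℕ} (T : ℝ × ℝ × EuclideanSpace ℝ (Fin n)) : ℝ :=
  Real.sqrt (T.1 ^ 2 + T.2.1 ^ 2 + ‖T.2.2‖ ^ 2)


open Real Set

lemma tangent_le {S : Set ℝ} {f : ℝ → ℝ} {x y f' : ℝ} (hfc : ConvexOn ℝ S f)
    (hx : x ∈ S) (hy : y ∈ S) (hd : HasDerivAt f f' x) :
    f x + f' * (y - x) ≤ f y := by
  rcases lt_trichotomy x y with h | rfl | h
  · have h1 := hfc.le_slope_of_hasDerivAt hx hy h hd
    rw [slope_def_field] at h1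
    have h2 : 0 < y - x := by linarith
    rw [le_div_iff₀ h2] at h1
    nlinarith
  · simp
  · have h1 := hfc.slope_le_of_hasDerivAt hy hx h hd
    rw [slope_def_field] at h1
    have h2 : 0 < x - y := by linarith
    rw [div_le_iff₀ h2] at h1
    nlinarith

lemma sRel_eq (n : ℕ) (m γ : ℝ) (y x : ℝ) :
    sRel n m γ y x = m ^ ((n : ℝ) * (γ - 1) / 2) / (γ - 1) *
      (y ^ γ - x ^ γ - γ * x ^ (γ - 1) * (y - x)) := by
  simp only [sRel, sFn, sFn']; ring

lemma sRel_nonneg (n : ℕ) {m γ : ℝ} (hm : 0 < m) (hγ : 1 < γ) {x y : ℝ}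
    (hx : 0 < x) (hy : 0 ≤ y) : 0 ≤ sRel n m γ y x := by
  have hM : (0:ℝ) < m ^ ((n : ℝ) * (γ - 1) / 2) := rpow_pos_of_pos hm _
  have htan := tangent_le (convexOn_rpow hγ.le) (mem_Ici.2 hx.le) (mem_Ici.2 hy)
    (Real.hasDerivAt_rpow_const (p := γ) (Or.inl hx.ne'))
  rw [sRel_eq]
  have : (0:ℝ) < γ - 1 := by linarith
  have h2 : 0 ≤ y ^ γ - x ^ γ - γ * x ^ (γ - 1) * (y - x) := by nlinarith
  positivity

lemma sRel_linear (n : ℕ) {m γ lb ub : ℝ} (hm : 0 < m) (hγ : 1 < γ)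
    (hlb : 0 < lb) (hlu : lb ≤ ub) :
    ∃ R₀ : ℝ, 1 ≤ R₀ ∧ ∀ x ν : ℝ, lb ≤ x → x ≤ ub → R₀ ≤ ν →
      ν ≤ sRel n m γ ν x := by
  set M := m ^ ((n : ℝ) * (γ - 1) / 2) with hMdef
  have hM : (0:ℝ) < M := rpow_pos_of_pos hm _
  have hub : (0:ℝ) < ub := lt_of_lt_of_le hlb hlu
  have hγ1 : (0:ℝ) < γ - 1 := by linarith
  set B : ℝ := ub ^ γ + γ * ub ^ (γ - 1) + (γ - 1) / M with hBdef
  have hB : 0 < B := by positivity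
  refine ⟨max 1 (B ^ (1 / (γ - 1))), le_max_left _ _, fun x ν hx hxu hν => ?_⟩
  have hν1 : (1:ℝ) ≤ ν := le_trans (le_max_left _ _) hν
  have hν0 : (0:ℝ) < ν := by linarith
  have hx0 : (0:ℝ) < x := lt_of_lt_of_le hlb hx
  -- ν ^ (γ-1) ≥ B
  have hpow : B ≤ ν ^ (γ - 1) := by
    have h1 : B ^ (1 / (γ - 1)) ≤ ν := le_trans (le_max_right _ _) hν
    have h2 : (B ^ (1 / (γ - 1))) ^ (γ - 1) ≤ ν ^ (γ - 1) :=
      rpow_le_rpow (by positivity) h1 hγ1.le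
    rwa [← rpow_mul hB.le, one_div, inv_mul_cancel₀ hγ1.ne', rpow_one] at h2
  have hubg : (0:ℝ) ≤ ub ^ γ := (rpow_pos_of_pos hub _).le
  have hubg1 : (0:ℝ) ≤ ub ^ (γ - 1) := (rpow_pos_of_pos hub _).le
  have hxg : x ^ γ ≤ ub ^ γ := rpow_le_rpow hx0.le hxu (by linarith)
  have hxg1 : x ^ (γ - 1) ≤ ub ^ (γ - 1) := rpow_le_rpow hx0.le hxu hγ1.le
  have hxg1' : (0:ℝ) ≤ x ^ (γ - 1) := (rpow_pos_of_pos hx0 _).le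
  have hsplit : ν ^ γ = ν * ν ^ (γ - 1) := by
    rw [← rpow_one_add' hν0.le (by linarith)]; ring_nf
  have hE : ν * ((γ - 1) / M) ≤ ν ^ γ - x ^ γ - γ * x ^ (γ - 1) * (ν - x) := by
    have h3 : x ^ γ ≤ ub ^ γ * ν := by nlinarith
    have h4 : γ * x ^ (γ - 1) * (ν - x) ≤ γ * ub ^ (γ - 1) * ν := by
      rcases le_or_gt x ν with hc | hc
      · have : x ^ (γ - 1) * (ν - x) ≤ ub ^ (γ - 1) * ν := by nlinarith
        nlinarith
      · have l0 : (0:ℝ) ≤ γ := by linarith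
        have l1 : 0 ≤ γ * x ^ (γ - 1) * (x - ν) :=
          mul_nonneg (mul_nonneg l0 hxg1') (by linarith)
        have l2 : 0 ≤ γ * ub ^ (γ - 1) * ν :=
          mul_nonneg (mul_nonneg l0 hubg1) hν0.le
        nlinarith
    have h5 : ν * B ≤ ν * ν ^ (γ - 1) :=
      mul_le_mul_of_nonneg_left hpow hν0.le
    rw [hsplit, hBdef] at *
    nlinarith
  rw [sRel_eq]
  have hId : ν = M / (γ - 1) * (ν * ((γ - 1) / M)) := by
    field_simp
  exact le_trans (le_of_eq hId) (mul_le_mul_of_nonneg_left hE (by positivity))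

lemma sRel_quadratic (n : ℕ) {m γ lb ub R : ℝ} (hm : 0 < m) (hγ : 1 < γ) (hγ' : γ ≤ 2)
    (hlb : 0 < lb) (hlu : lb ≤ ub) (hR : ub ≤ R) :
    ∃ c : ℝ, 0 < c ∧ ∀ x ν : ℝ, lb ≤ x → x ≤ ub → 0 ≤ ν → ν ≤ R →
      c * (ν - x) ^ 2 ≤ sRel n m γ ν x := by
  set M := m ^ ((n : ℝ) * (γ - 1) / 2) with hMdef
  have hM : (0:ℝ) < M := rpow_pos_of_pos hm _
  have hub : (0:ℝ) < ub := lt_of_lt_of_le hlb hlu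
  have hγ1 : (0:ℝ) < γ - 1 := by linarith
  set T : ℝ := R + 1 with hTdef
  have hT : (0:ℝ) < T := by linarith
  set c : ℝ := M * γ * T ^ (γ - 2) / 2 with hcdef
  have hc : 0 < c := by positivity
  set g : ℝ → ℝ := fun t => M / (γ - 1) * t ^ γ - c * t ^ 2 with hgdef
  set g' : ℝ → ℝ := fun t => M / (γ - 1) * (γ * t ^ (γ - 1)) - c * (2 * t) with hg'def
  have hdg : ∀ t : ℝ, t ≠ 0 → HasDerivAt g (g' t) t := by
    intro t ht
    exact ((Real.hasDerivAt_rpow_const (p := γ) (Or.inl ht)).const_mul (M / (γ - 1))).sub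
      (((hasDerivAt_pow 2 t).const_mul c).congr_deriv (by ring))
  have hconv : ConvexOn ℝ (Set.Icc 0 T) g := by
    apply convexOn_of_hasDerivWithinAt2_nonneg (convex_Icc 0 T)
      (f' := g') (f'' := fun t => M * γ * t ^ (γ - 2) - 2 * c)
    · exact ((continuous_const.mul (Real.continuous_rpow_const
        (by linarith : (0:ℝ) ≤ γ))).sub (continuous_const.mul (continuous_pow 2))).continuousOn
    · rw [interior_Icc]
      exact fun t ht => (hdg t ht.1.ne').hasDerivWithinAt
    · rw [interior_Icc]
      intro t ht
      have h1 : HasDerivAt (fun u : ℝ => u ^ (γ - 1)) ((γ - 1) * t ^ (γ - 1 - 1)) t :=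
        Real.hasDerivAt_rpow_const (Or.inl ht.1.ne')
      have h2 : HasDerivAt g' (M / (γ - 1) * (γ * ((γ - 1) * t ^ (γ - 1 - 1))) - c * 2) t :=
        ((h1.const_mul γ).const_mul (M / (γ - 1))).sub ((hasDerivAt_id t).const_mul 2 |>.const_mul c |>.congr_deriv (by ring))
      refine (h2.congr_deriv ?_).hasDerivWithinAt
      have : γ - 1 - 1 = γ - 2 := by ring
      rw [this]; field_simp
    · rw [interior_Icc]
      intro t ht
      have h3 : T ^ (γ - 2) ≤ t ^ (γ - 2) :=
        rpow_le_rpow_of_nonpos ht.1 (by linarith [ht.2]) (by linarith)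
      have h4 : 0 < M * γ := by positivity
      have := mul_le_mul_of_nonneg_left h3 h4.le
      simp only [hcdef]; nlinarith
  refine ⟨c, hc, fun x ν hx hxu hν hνR => ?_⟩
  have hx0 : (0:ℝ) < x := lt_of_lt_of_le hlb hx
  have hmemx : x ∈ Set.Icc (0:ℝ) T := ⟨hx0.le, by linarith⟩
  have hmemν : ν ∈ Set.Icc (0:ℝ) T := ⟨hν, by linarith⟩
  have htan := tangent_le hconv hmemx hmemν (hdg x hx0.ne')
  rw [sRel_eq]
  simp only [hgdef, hg'def] at htan
  nlinarith [htan]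

set_option maxHeartbeats 1000000 in
lemma scalar_bound (mm MM K lb c R : ℝ) (hmm : 0 < mm) (hmM : mm ≤ MM)
    (hK : 1 ≤ K) (hlb : 0 < lb) (hc : 0 < c) (hlbR : lb ≤ R) :
    ∃ C' : ℝ, 0 < C' ∧ ∀ ρ ν₁ ν₂ n₁ n₂ S₁ S₂ D Q : ℝ,
      0 ≤ S₁ → 0 ≤ S₂ → 0 ≤ D → 0 < ρ →
      mm * (ν₁ + ν₂) ≤ ρ → ρ ≤ MM * (ν₁ + ν₂) →
      0 ≤ ν₁ → 0 ≤ ν₂ → lb ≤ n₁ → lb ≤ n₂ →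
      (ν₁ ≤ R → c * (ν₁ - n₁) ^ 2 ≤ S₁) → (ν₂ ≤ R → c * (ν₂ - n₂) ^ 2 ≤ S₂) →
      (R ≤ ν₁ → ν₁ ≤ S₁) → (R ≤ ν₂ → ν₂ ≤ S₂) →
      0 ≤ Q → Q ≤ 2 * K * (|ν₁ - n₁| + |ν₂ - n₂|) → Q ≤ 4 / mm * ρ →
      Q * D + ρ * D ^ 2 + (S₁ + S₂) ≤ C' * (ρ / 2 * D ^ 2 + (S₁ + S₂)) := by
  have hMM : 0 < MM := lt_of_lt_of_le hmm hmM
  obtain ⟨r, hr0, hrdef⟩ : ∃ r : ℝ, 0 ≤ r ∧ r = 2 / (c * lb) := ⟨_, by positivity, rfl⟩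
  obtain ⟨q, hq0, hqdef⟩ : ∃ q : ℝ, 0 < q ∧ q = 8 * K ^ 2 / (c * mm * lb) :=
    ⟨_, by positivity, rfl⟩
  obtain ⟨Cb, hCb0, hCbdef⟩ : ∃ Cb : ℝ, 0 < Cb ∧ mm * Cb = 2 * MM * (2 + r) + 4 + 3 * mm := by
    refine ⟨(2 * MM * (2 + r) + 4 + 3 * mm) / mm, by positivity, by field_simp⟩
  refine ⟨(q + 4) + Cb, by positivity, ?_⟩
  intro ρ ν₁ ν₂ n₁ n₂ S₁ S₂ D Q hS₁ hS₂ hD hρ hρl hρu hν₁ hν₂ hn₁ hn₂ hq₁ hq₂ hl₁ hl₂ hQ0 hQa hQb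
  have hη : 0 ≤ ρ / 2 * D ^ 2 + (S₁ + S₂) := by positivity
  have l1 : ρ * D ^ 2 ≤ 2 * (ρ / 2 * D ^ 2 + (S₁ + S₂)) := by nlinarith
  have l2 : S₁ + S₂ ≤ ρ / 2 * D ^ 2 + (S₁ + S₂) := by nlinarith
  by_cases hcase : ν₁ ≤ R ∧ ν₂ ≤ R ∧ lb / 2 ≤ ν₁ + ν₂
  · -- case 1
    obtain ⟨h1, h2, h3⟩ := hcase
    have hρ₀ : mm * lb / 2 ≤ ρ := by nlinarith
    have hA : (0:ℝ) ≤ |ν₁ - n₁| + |ν₂ - n₂| := by positivity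
    have young : Q * D ≤ 4 * K ^ 2 * (|ν₁ - n₁| + |ν₂ - n₂|) ^ 2 / (2 * ρ) + ρ * D ^ 2 / 2 := by
      have j1 : Q * D ≤ 2 * K * (|ν₁ - n₁| + |ν₂ - n₂|) * D := mul_le_mul_of_nonneg_right hQa hD
      have j2 : (2 * K * (|ν₁ - n₁| + |ν₂ - n₂|) * D) * (2 * ρ) ≤
          4 * K ^ 2 * (|ν₁ - n₁| + |ν₂ - n₂|) ^ 2 + ρ ^ 2 * D ^ 2 := by
        nlinarith [sq_nonneg (2 * K * (|ν₁ - n₁| + |ν₂ - n₂|) - ρ * D)]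
      calc Q * D ≤ 2 * K * (|ν₁ - n₁| + |ν₂ - n₂|) * D := j1
        _ ≤ (4 * K ^ 2 * (|ν₁ - n₁| + |ν₂ - n₂|) ^ 2 + ρ ^ 2 * D ^ 2) / (2 * ρ) := by
            rw [le_div_iff₀ (by positivity)]; exact j2
        _ = 4 * K ^ 2 * (|ν₁ - n₁| + |ν₂ - n₂|) ^ 2 / (2 * ρ) + ρ * D ^ 2 / 2 := by
            field_simp
    have hA2 : (|ν₁ - n₁| + |ν₂ - n₂|) ^ 2 ≤ 2 / c * (S₁ + S₂) := by
      have k1 := hq₁ h1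
      have k2 := hq₂ h2
      have hA2c : c * ((|ν₁ - n₁| + |ν₂ - n₂|) ^ 2) ≤ 2 * (S₁ + S₂) := by
        nlinarith [sq_nonneg (|ν₁ - n₁| - |ν₂ - n₂|), sq_abs (ν₁ - n₁), sq_abs (ν₂ - n₂),
          abs_nonneg (ν₁ - n₁), abs_nonneg (ν₂ - n₂)]
      rw [div_mul_eq_mul_div, le_div_iff₀ hc]
      nlinarith [hA2c]
    have e1 : 4 * K ^ 2 * (|ν₁ - n₁| + |ν₂ - n₂|) ^ 2 / (2 * ρ) ≤ q * (S₁ + S₂) := by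
      have num : 4 * K ^ 2 * (|ν₁ - n₁| + |ν₂ - n₂|) ^ 2 ≤ 4 * K ^ 2 * (2 / c * (S₁ + S₂)) :=
        mul_le_mul_of_nonneg_left hA2 (by positivity)
      calc 4 * K ^ 2 * (|ν₁ - n₁| + |ν₂ - n₂|) ^ 2 / (2 * ρ)
          ≤ 4 * K ^ 2 * (2 / c * (S₁ + S₂)) / (mm * lb) :=
            div_le_div₀ (by positivity) num (by positivity) (by linarith)
        _ = q * (S₁ + S₂) := by rw [hqdef]; field_simp; ring
    have e2 : q * (S₁ + S₂) ≤ q * (ρ / 2 * D ^ 2 + (S₁ + S₂)) :=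
      mul_le_mul_of_nonneg_left l2 hq0.le
    have expand : ((q + 4) + Cb) * (ρ / 2 * D ^ 2 + (S₁ + S₂)) =
        q * (ρ / 2 * D ^ 2 + (S₁ + S₂)) + 4 * (ρ / 2 * D ^ 2 + (S₁ + S₂))
        + Cb * (ρ / 2 * D ^ 2 + (S₁ + S₂)) := by ring
    rw [expand]
    have hCbη : 0 ≤ Cb * (ρ / 2 * D ^ 2 + (S₁ + S₂)) := mul_nonneg hCb0.le hη
    linarith
  · -- case 2
    have hP : ν₁ + ν₂ ≤ 2 * (S₁ + S₂) + r * S₁ + r * S₂ := by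
      have hrS₁ : 0 ≤ r * S₁ := mul_nonneg hr0 hS₁
      have hrS₂ : 0 ≤ r * S₂ := mul_nonneg hr0 hS₂
      push_neg at hcase
      rcases le_or_gt ν₁ R with hv1 | hv1
      · rcases le_or_gt ν₂ R with hv2 | hv2
        · have h3 := hcase hv1 hv2
          have k1 := hq₁ hv1
          have hd1 : lb / 2 ≤ n₁ - ν₁ := by linarith
          have hsq2 : (lb / 2) ^ 2 ≤ (ν₁ - n₁) ^ 2 := by nlinarith
          have hsq : c * (lb / 2) ^ 2 ≤ S₁ :=
            le_trans (mul_le_mul_of_nonneg_left hsq2 hc.le) k1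
          have hlbS : lb / 2 ≤ r * S₁ := by
            have j := mul_le_mul_of_nonneg_left hsq hr0
            have : r * (c * (lb / 2) ^ 2) = lb / 2 := by rw [hrdef]; field_simp
            linarith
          linarith
        · have k2 := hl₂ hv2.le
          have k1 : ν₁ ≤ S₂ := le_trans hv1 (le_trans hv2.le k2)
          linarith
      · have k1 := hl₁ hv1.le
        have k2 : ν₂ ≤ S₁ + S₂ := by
          rcases le_or_gt ν₂ R with hv2 | hv2
          · linarith [le_trans hv2 (le_trans hv1.le k1)]
          · linarith [hl₂ hv2.le]
        linarith
    have d1 : mm * (Q * D) ≤ 4 * (ρ * D) := by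
      have j := mul_le_mul_of_nonneg_right (mul_le_mul_of_nonneg_right hQb hD) hmm.le
      have h4 : 4 / mm * ρ * D * mm = 4 * (ρ * D) := by field_simp
      nlinarith
    have d2 : ρ * D ≤ ρ / 2 + ρ * D ^ 2 / 2 := by nlinarith [mul_nonneg hρ.le (sq_nonneg (1 - D))]
    have d3 : ρ ≤ MM * (2 * (S₁ + S₂) + r * S₁ + r * S₂) :=
      le_trans hρu (mul_le_mul_of_nonneg_left hP hMM.le)
    have key : mm * (Q * D + ρ * D ^ 2 + (S₁ + S₂)) ≤
        (2 * MM * (2 + r) + 4 + 3 * mm) * (ρ / 2 * D ^ 2 + (S₁ + S₂)) := by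
      have l1' := mul_le_mul_of_nonneg_left l1 hmm.le
      have l2' := mul_le_mul_of_nonneg_left l2 hmm.le
      have l2'' := mul_le_mul_of_nonneg_left l2 (by positivity : (0:ℝ) ≤ 2 * MM * (2 + r))
      have hrS : 2 * (S₁ + S₂) + r * S₁ + r * S₂ ≤ (2 + r) * (S₁ + S₂) := by ring_nf; linarith
      have d3' : ρ ≤ MM * ((2 + r) * (S₁ + S₂)) :=
        le_trans d3 (mul_le_mul_of_nonneg_left hrS hMM.le)
      nlinarith [d1, d2, d3', l1', l2', l2'']
    have hre : mm * (Cb * (ρ / 2 * D ^ 2 + (S₁ + S₂))) =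
        (2 * MM * (2 + r) + 4 + 3 * mm) * (ρ / 2 * D ^ 2 + (S₁ + S₂)) := by
      rw [← hCbdef]; ring
    have main : Q * D + ρ * D ^ 2 + (S₁ + S₂) ≤ Cb * (ρ / 2 * D ^ 2 + (S₁ + S₂)) := by
      have := key
      rw [← hre] at this
      exact le_of_mul_le_mul_left this hmm
    have expand : ((q + 4) + Cb) * (ρ / 2 * D ^ 2 + (S₁ + S₂)) =
        Cb * (ρ / 2 * D ^ 2 + (S₁ + S₂)) + (q + 4) * (ρ / 2 * D ^ 2 + (S₁ + S₂)) := by ring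
    rw [expand]
    have : 0 ≤ (q + 4) * (ρ / 2 * D ^ 2 + (S₁ + S₂)) := mul_nonneg (by positivity) hη
    linarith

lemma coord_le_norm {n : ℕ} (x : EuclideanSpace ℝ (Fin n)) (i : Fin n) : |x i| ≤ ‖x‖ := by
  rw [EuclideanSpace.norm_eq, ← Real.sqrt_sq_eq_abs]
  apply Real.sqrt_le_sqrt
  have h := Finset.single_le_sum (f := fun j => ‖x j‖ ^ 2) (fun j _ => by positivity)
    (Finset.mem_univ i)
  simpa [Real.norm_eq_abs, sq_abs] using h

lemma tripNorm_le {n : ℕ} (T : ℝ × ℝ × EuclideanSpace ℝ (Fin n)) :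
    tripNorm T ≤ |T.1| + |T.2.1| + ‖T.2.2‖ := by
  rw [tripNorm]
  have h : T.1 ^ 2 + T.2.1 ^ 2 + ‖T.2.2‖ ^ 2 ≤ (|T.1| + |T.2.1| + ‖T.2.2‖) ^ 2 := by
    nlinarith [sq_abs T.1, sq_abs T.2.1,
      mul_nonneg (abs_nonneg T.1) (abs_nonneg T.2.1),
      mul_nonneg (abs_nonneg T.1) (norm_nonneg T.2.2),
      mul_nonneg (abs_nonneg T.2.1) (norm_nonneg T.2.2)]
  calc Real.sqrt (T.1 ^ 2 + T.2.1 ^ 2 + ‖T.2.2‖ ^ 2)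
      ≤ Real.sqrt ((|T.1| + |T.2.1| + ‖T.2.2‖) ^ 2) := Real.sqrt_le_sqrt h
    _ = |T.1| + |T.2.1| + ‖T.2.2‖ := Real.sqrt_sq (by positivity)

lemma column_bound {n : ℕ} (i : Fin n) (F₁ F₂ ρ G : ℝ) (u v : EuclideanSpace ℝ (Fin n))
    (hρ : 0 ≤ ρ) (hG : 0 ≤ G) :
    tripNorm (F₁ * (u i - v i), F₂ * (u i - v i),
      (ρ * (v i - u i)) • (v - u) + G • EuclideanSpace.single i 1) ≤
      (|F₁| + |F₂|) * ‖v - u‖ + ρ * ‖v - u‖ ^ 2 + G := by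
  refine le_trans (tripNorm_le _) ?_
  simp only
  have happ : (v - u) i = v i - u i := by simp [PiLp.sub_apply]
  have hc : |v i - u i| ≤ ‖v - u‖ := by rw [← happ]; exact coord_le_norm _ i
  have hc' : |u i - v i| ≤ ‖v - u‖ := by rw [abs_sub_comm]; exact hc
  have ha : |F₁ * (u i - v i)| ≤ |F₁| * ‖v - u‖ := by
    rw [abs_mul]; exact mul_le_mul_of_nonneg_left hc' (abs_nonneg _)
  have hb : |F₂ * (u i - v i)| ≤ |F₂| * ‖v - u‖ := by
    rw [abs_mul]; exact mul_le_mul_of_nonneg_left hc' (abs_nonneg _)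
  have hz : ‖(ρ * (v i - u i)) • (v - u) + G • EuclideanSpace.single i 1‖ ≤
      ρ * ‖v - u‖ ^ 2 + G := by
    refine le_trans (norm_add_le _ _) ?_
    rw [norm_smul, norm_smul, EuclideanSpace.norm_single, Real.norm_eq_abs, Real.norm_eq_abs,
      norm_one, abs_mul, abs_of_nonneg hρ, abs_of_nonneg hG, mul_one]
    have h2 : ρ * |v i - u i| * ‖v - u‖ ≤ ρ * (‖v - u‖ * ‖v - u‖) := by
      have := mul_le_mul_of_nonneg_right hc (norm_nonneg (v - u))
      nlinarith
    nlinarith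
  nlinarith [abs_nonneg (F₁ * (u i - v i)), abs_nonneg (F₂ * (u i - v i)),
    le_abs_self (F₁ * (u i - v i)), le_abs_self (F₂ * (u i - v i))]

set_option maxHeartbeats 1000000 in
lemma pointwise_bound (n : ℕ) (hn : 1 ≤ n) (m₁ m₂ γ₁ γ₂ lb ub : ℝ)
    (hm₁ : 0 < m₁) (hm₂ : 0 < m₂)
    (hγ₁ : 1 < γ₁) (hγ₁' : γ₁ ≤ 2) (hγ₂ : 1 < γ₂) (hγ₂' : γ₂ ≤ 2)
    (hlb : 0 < lb) (hlu : lb ≤ ub) :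
    ∃ C : ℝ, 0 < C ∧ ∀ (n₁ n₂ ν₁ ν₂ : ℝ) (w ω : EuclideanSpace ℝ (Fin n)),
      lb ≤ n₁ → n₁ ≤ ub → lb ≤ n₂ → n₂ ≤ ub → 0 ≤ ν₁ → 0 ≤ ν₂ →
      0 < m₁ * ν₁ + m₂ * ν₂ →
      ∑ i : Fin n, tripNorm (relFluxCol n m₁ m₂ γ₁ γ₂ i n₁ n₂ ν₁ ν₂ w ω) ≤
        C * relEntDens n m₁ m₂ γ₁ γ₂ n₁ n₂ ν₁ ν₂ w ω := by
  obtain ⟨R₁, hR₁1, hlin₁⟩ := sRel_linear n hm₁ hγ₁ hlb hlu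
  obtain ⟨R₂, hR₂1, hlin₂⟩ := sRel_linear n hm₂ hγ₂ hlb hlu
  have hRub : ub ≤ max (max R₁ R₂) ub := le_max_right _ _
  obtain ⟨c₁, hc₁, hquad₁⟩ := sRel_quadratic n hm₁ hγ₁ hγ₁' hlb hlu hRub
  obtain ⟨c₂, hc₂, hquad₂⟩ := sRel_quadratic n hm₂ hγ₂ hγ₂' hlb hlu hRub
  have hmm : 0 < min m₁ m₂ := lt_min hm₁ hm₂
  have hmM : min m₁ m₂ ≤ max m₁ m₂ := le_trans (min_le_left _ _) (le_max_left _ _)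
  have hK : 1 ≤ max m₁ m₂ / min m₁ m₂ + 1 := by
    have : 0 ≤ max m₁ m₂ / min m₁ m₂ := by positivity
    linarith
  have hcc : 0 < min c₁ c₂ := lt_min hc₁ hc₂
  obtain ⟨C', hC', hsc⟩ := scalar_bound (min m₁ m₂) (max m₁ m₂) (max m₁ m₂ / min m₁ m₂ + 1)
    lb (min c₁ c₂) (max (max R₁ R₂) ub) hmm hmM hK hlb hcc (le_trans hlu hRub)
  refine ⟨n * C', by positivity, ?_⟩
  intro n₁ n₂ ν₁ ν₂ w ω hn₁ hn₁' hn₂ hn₂' hν₁ hν₂ hρ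
  have hn₁0 : 0 < n₁ := lt_of_lt_of_le hlb hn₁
  have hn₂0 : 0 < n₂ := lt_of_lt_of_le hlb hn₂
  have hρU : 0 < m₁ * n₁ + m₂ * n₂ := by positivity
  simp only [relFluxCol, relEntDens]
  set ρU : ℝ := m₁ * n₁ + m₂ * n₂ with hρUdef
  set ρ : ℝ := m₁ * ν₁ + m₂ * ν₂ with hρdef
  set u : EuclideanSpace ℝ (Fin n) := ρU⁻¹ • w with hudef
  set v : EuclideanSpace ℝ (Fin n) := ρ⁻¹ • ω with hvdef
  set S₁ : ℝ := sRel n m₁ γ₁ ν₁ n₁ with hS₁def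
  set S₂ : ℝ := sRel n m₂ γ₂ ν₂ n₂ with hS₂def
  have hS₁0 : 0 ≤ S₁ := sRel_nonneg n hm₁ hγ₁ hn₁0 hν₁
  have hS₂0 : 0 ≤ S₂ := sRel_nonneg n hm₂ hγ₂ hn₂0 hν₂
  have hρU' : 0 < ρU := hρU
  -- fraction bounds
  have hfrac₁ : n₁ / ρU ≤ 1 / min m₁ m₂ := by
    rw [div_le_div_iff₀ hρU' hmm, hρUdef]
    nlinarith [min_le_left m₁ m₂, min_le_right m₁ m₂]
  have hfrac₂ : n₂ / ρU ≤ 1 / min m₁ m₂ := by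
    rw [div_le_div_iff₀ hρU' hmm, hρUdef]
    nlinarith [min_le_left m₁ m₂, min_le_right m₁ m₂]
  have hfrac₁0 : 0 ≤ n₁ / ρU := by positivity
  have hfrac₂0 : 0 ≤ n₂ / ρU := by positivity
  have habsmass : |m₁ * (ν₁ - n₁) + m₂ * (ν₂ - n₂)| ≤
      max m₁ m₂ * |ν₁ - n₁| + max m₁ m₂ * |ν₂ - n₂| := by
    refine le_trans (abs_add_le _ _) ?_
    rw [abs_mul, abs_mul, abs_of_pos hm₁, abs_of_pos hm₂]
    have h1 := abs_nonneg (ν₁ - n₁); have h2 := abs_nonneg (ν₂ - n₂)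
    nlinarith [le_max_left m₁ m₂, le_max_right m₁ m₂]
  -- coefficient bound, first kind
  have hFid₁ : (n₁ / ρU - ν₁ / ρ) * ρ =
      n₁ / ρU * (m₁ * (ν₁ - n₁) + m₂ * (ν₂ - n₂)) - (ν₁ - n₁) := by
    rw [hρUdef, hρdef]
    have hρ' : m₁ * ν₁ + m₂ * ν₂ ≠ 0 := hρ.ne'
    field_simp
    ring
  have hFid₂ : (n₂ / ρU - ν₂ / ρ) * ρ =
      n₂ / ρU * (m₁ * (ν₁ - n₁) + m₂ * (ν₂ - n₂)) - (ν₂ - n₂) := by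
    rw [hρUdef, hρdef]
    have hρ' : m₁ * ν₁ + m₂ * ν₂ ≠ 0 := hρ.ne'
    field_simp
    ring
  have habs₁ : |(n₁ / ρU - ν₁ / ρ) * ρ| ≤
      (max m₁ m₂ / min m₁ m₂ + 1) * (|ν₁ - n₁| + |ν₂ - n₂|) := by
    rw [hFid₁]
    refine le_trans (abs_sub _ _) ?_
    rw [abs_mul, abs_of_nonneg hfrac₁0]
    have h1 : n₁ / ρU * |m₁ * (ν₁ - n₁) + m₂ * (ν₂ - n₂)| ≤
        1 / min m₁ m₂ * (max m₁ m₂ * |ν₁ - n₁| + max m₁ m₂ * |ν₂ - n₂|) :=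
      mul_le_mul hfrac₁ habsmass (abs_nonneg _) (by positivity)
    have h2 : 1 / min m₁ m₂ * (max m₁ m₂ * |ν₁ - n₁| + max m₁ m₂ * |ν₂ - n₂|) =
        max m₁ m₂ / min m₁ m₂ * (|ν₁ - n₁| + |ν₂ - n₂|) := by
      field_simp
    have h3 : (max m₁ m₂ / min m₁ m₂ + 1) * (|ν₁ - n₁| + |ν₂ - n₂|) =
        max m₁ m₂ / min m₁ m₂ * (|ν₁ - n₁| + |ν₂ - n₂|) + (|ν₁ - n₁| + |ν₂ - n₂|) := by ring
    rw [h3]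
    have := abs_nonneg (ν₂ - n₂)
    linarith [h1, h2.symm.le]
  have habs₂ : |(n₂ / ρU - ν₂ / ρ) * ρ| ≤
      (max m₁ m₂ / min m₁ m₂ + 1) * (|ν₁ - n₁| + |ν₂ - n₂|) := by
    rw [hFid₂]
    refine le_trans (abs_sub _ _) ?_
    rw [abs_mul, abs_of_nonneg hfrac₂0]
    have h1 : n₂ / ρU * |m₁ * (ν₁ - n₁) + m₂ * (ν₂ - n₂)| ≤
        1 / min m₁ m₂ * (max m₁ m₂ * |ν₁ - n₁| + max m₁ m₂ * |ν₂ - n₂|) :=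
      mul_le_mul hfrac₂ habsmass (abs_nonneg _) (by positivity)
    have h2 : 1 / min m₁ m₂ * (max m₁ m₂ * |ν₁ - n₁| + max m₁ m₂ * |ν₂ - n₂|) =
        max m₁ m₂ / min m₁ m₂ * (|ν₁ - n₁| + |ν₂ - n₂|) := by
      field_simp
    have h3 : (max m₁ m₂ / min m₁ m₂ + 1) * (|ν₁ - n₁| + |ν₂ - n₂|) =
        max m₁ m₂ / min m₁ m₂ * (|ν₁ - n₁| + |ν₂ - n₂|) + (|ν₁ - n₁| + |ν₂ - n₂|) := by ring
    rw [h3]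
    have := abs_nonneg (ν₁ - n₁)
    linarith [h1, h2.symm.le]
  -- coefficient bound, second kind
  have hν₁ρ : ν₁ ≤ 1 / min m₁ m₂ * ρ := by
    rw [div_mul_eq_mul_div, le_div_iff₀ hmm, hρdef]
    nlinarith [min_le_left m₁ m₂, min_le_right m₁ m₂]
  have hν₂ρ : ν₂ ≤ 1 / min m₁ m₂ * ρ := by
    rw [div_mul_eq_mul_div, le_div_iff₀ hmm, hρdef]
    nlinarith [min_le_left m₁ m₂, min_le_right m₁ m₂]
  have habs₁' : |(n₁ / ρU - ν₁ / ρ) * ρ| ≤ 2 / min m₁ m₂ * ρ := by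
    have hid : (n₁ / ρU - ν₁ / ρ) * ρ = n₁ / ρU * ρ - ν₁ := by
      rw [sub_mul, div_mul_cancel₀ _ hρ.ne']
    rw [hid]
    refine le_trans (abs_sub _ _) ?_
    rw [abs_mul, abs_of_nonneg hfrac₁0, abs_of_nonneg hν₁, abs_of_pos hρ]
    have h1 : n₁ / ρU * ρ ≤ 1 / min m₁ m₂ * ρ := mul_le_mul_of_nonneg_right hfrac₁ hρ.le
    have h2 : 1 / min m₁ m₂ * ρ + 1 / min m₁ m₂ * ρ = 2 / min m₁ m₂ * ρ := by ring
    linarith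
  have habs₂' : |(n₂ / ρU - ν₂ / ρ) * ρ| ≤ 2 / min m₁ m₂ * ρ := by
    have hid : (n₂ / ρU - ν₂ / ρ) * ρ = n₂ / ρU * ρ - ν₂ := by
      rw [sub_mul, div_mul_cancel₀ _ hρ.ne']
    rw [hid]
    refine le_trans (abs_sub _ _) ?_
    rw [abs_mul, abs_of_nonneg hfrac₂0, abs_of_nonneg hν₂, abs_of_pos hρ]
    have h1 : n₂ / ρU * ρ ≤ 1 / min m₁ m₂ * ρ := mul_le_mul_of_nonneg_right hfrac₂ hρ.le
    have h2 : 1 / min m₁ m₂ * ρ + 1 / min m₁ m₂ * ρ = 2 / min m₁ m₂ * ρ := by ring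
    linarith
  -- scalar input facts
  have hρl : min m₁ m₂ * (ν₁ + ν₂) ≤ ρ := by
    have a1 : min m₁ m₂ * ν₁ ≤ m₁ * ν₁ := mul_le_mul_of_nonneg_right (min_le_left _ _) hν₁
    have a2 : min m₁ m₂ * ν₂ ≤ m₂ * ν₂ := mul_le_mul_of_nonneg_right (min_le_right _ _) hν₂
    have e : min m₁ m₂ * (ν₁ + ν₂) = min m₁ m₂ * ν₁ + min m₁ m₂ * ν₂ := by ring
    rw [hρdef]; linarith
  have hρu : ρ ≤ max m₁ m₂ * (ν₁ + ν₂) := by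
    have a1 : m₁ * ν₁ ≤ max m₁ m₂ * ν₁ := mul_le_mul_of_nonneg_right (le_max_left _ _) hν₁
    have a2 : m₂ * ν₂ ≤ max m₁ m₂ * ν₂ := mul_le_mul_of_nonneg_right (le_max_right _ _) hν₂
    have e : max m₁ m₂ * (ν₁ + ν₂) = max m₁ m₂ * ν₁ + max m₁ m₂ * ν₂ := by ring
    rw [hρdef]; linarith
  have hq₁' : ν₁ ≤ max (max R₁ R₂) ub → min c₁ c₂ * (ν₁ - n₁) ^ 2 ≤ S₁ := fun h =>
    le_trans (mul_le_mul_of_nonneg_right (min_le_left _ _) (sq_nonneg _))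
      (hquad₁ n₁ ν₁ hn₁ hn₁' hν₁ h)
  have hq₂' : ν₂ ≤ max (max R₁ R₂) ub → min c₁ c₂ * (ν₂ - n₂) ^ 2 ≤ S₂ := fun h =>
    le_trans (mul_le_mul_of_nonneg_right (min_le_right _ _) (sq_nonneg _))
      (hquad₂ n₂ ν₂ hn₂ hn₂' hν₂ h)
  have hl₁' : max (max R₁ R₂) ub ≤ ν₁ → ν₁ ≤ S₁ := fun h =>
    hlin₁ n₁ ν₁ hn₁ hn₁' (le_trans (le_trans (le_max_left R₁ R₂) (le_max_left _ _)) h)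
  have hl₂' : max (max R₁ R₂) ub ≤ ν₂ → ν₂ ≤ S₂ := fun h =>
    hlin₂ n₂ ν₂ hn₂ hn₂' (le_trans (le_trans (le_max_right R₁ R₂) (le_max_left _ _)) h)
  have hQa : |(n₁ / ρU - ν₁ / ρ) * ρ| + |(n₂ / ρU - ν₂ / ρ) * ρ| ≤
      2 * (max m₁ m₂ / min m₁ m₂ + 1) * (|ν₁ - n₁| + |ν₂ - n₂|) := by
    have h : 2 * (max m₁ m₂ / min m₁ m₂ + 1) * (|ν₁ - n₁| + |ν₂ - n₂|) =
        (max m₁ m₂ / min m₁ m₂ + 1) * (|ν₁ - n₁| + |ν₂ - n₂|) +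
        (max m₁ m₂ / min m₁ m₂ + 1) * (|ν₁ - n₁| + |ν₂ - n₂|) := by ring
    linarith
  have hQb : |(n₁ / ρU - ν₁ / ρ) * ρ| + |(n₂ / ρU - ν₂ / ρ) * ρ| ≤ 4 / min m₁ m₂ * ρ := by
    have h : 4 / min m₁ m₂ * ρ = 2 / min m₁ m₂ * ρ + 2 / min m₁ m₂ * ρ := by ring
    linarith
  have key := hsc ρ ν₁ ν₂ n₁ n₂ S₁ S₂ ‖v - u‖
    (|(n₁ / ρU - ν₁ / ρ) * ρ| + |(n₂ / ρU - ν₂ / ρ) * ρ|)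
    hS₁0 hS₂0 (norm_nonneg _) hρ hρl hρu hν₁ hν₂ hn₁ hn₂ hq₁' hq₂' hl₁' hl₂'
    (by positivity) hQa hQb
  -- assemble
  have hG0 : 0 ≤ (γ₁ - 1) * S₁ + (γ₂ - 1) * S₂ :=
    add_nonneg (mul_nonneg (by linarith) hS₁0) (mul_nonneg (by linarith) hS₂0)
  have hG2 : (γ₁ - 1) * S₁ + (γ₂ - 1) * S₂ ≤ S₁ + S₂ := by
    linarith [mul_nonneg (by linarith : (0:ℝ) ≤ 2 - γ₁) hS₁0,
      mul_nonneg (by linarith : (0:ℝ) ≤ 2 - γ₂) hS₂0]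
  calc (∑ i : Fin n, tripNorm
        ((n₁ / ρU - ν₁ / ρ) * ρ * (u i - v i),
         (n₂ / ρU - ν₂ / ρ) * ρ * (u i - v i),
         (ρ * (v i - u i)) • (v - u) +
           ((γ₁ - 1) * S₁ + (γ₂ - 1) * S₂) • EuclideanSpace.single i 1))
      ≤ ∑ _i : Fin n, ((|(n₁ / ρU - ν₁ / ρ) * ρ| + |(n₂ / ρU - ν₂ / ρ) * ρ|) * ‖v - u‖ +
          ρ * ‖v - u‖ ^ 2 + ((γ₁ - 1) * S₁ + (γ₂ - 1) * S₂)) :=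
        Finset.sum_le_sum (fun i _ => column_bound i _ _ ρ _ u v hρ.le hG0)
    _ = (n : ℝ) * ((|(n₁ / ρU - ν₁ / ρ) * ρ| + |(n₂ / ρU - ν₂ / ρ) * ρ|) * ‖v - u‖ +
          ρ * ‖v - u‖ ^ 2 + ((γ₁ - 1) * S₁ + (γ₂ - 1) * S₂)) := by
        rw [Finset.sum_const, Finset.card_univ, Fintype.card_fin, nsmul_eq_mul]
    _ ≤ (n : ℝ) * ((|(n₁ / ρU - ν₁ / ρ) * ρ| + |(n₂ / ρU - ν₂ / ρ) * ρ|) * ‖v - u‖ +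
          ρ * ‖v - u‖ ^ 2 + (S₁ + S₂)) :=
        mul_le_mul_of_nonneg_left (by linarith) (Nat.cast_nonneg n)
    _ ≤ (n : ℝ) * (C' * (ρ / 2 * ‖v - u‖ ^ 2 + (S₁ + S₂))) :=
        mul_le_mul_of_nonneg_left key (Nat.cast_nonneg n)
    _ = (n : ℝ) * C' * (ρ / 2 * ‖v - u‖ ^ 2 + S₁ + S₂) := by ring

/-- The integrated relative flux is controlled by the integrated relative
entropy, with a constant depending only on `λ, Λ, m₁, m₂, γ₁, γ₂`. -/
theorem relative_flux_le_relative_entropy (n : ℕ) (hn : 1 ≤ n)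
    (m₁ m₂ γ₁ γ₂ lb ub : ℝ) (hm₁ : 0 < m₁) (hm₂ : 0 < m₂)
    (hγ₁ : 1 < γ₁) (hγ₁' : γ₁ ≤ 2) (hγ₂ : 1 < γ₂) (hγ₂' : γ₂ ≤ 2)
    (hlb : 0 < lb) (hlu : lb ≤ ub) :
    ∃ C : ℝ, 0 < C ∧
      ∀ (n₁ n₂ ν₁ ν₂ : EuclideanSpace ℝ (Fin n) → ℝ)
        (w ω : EuclideanSpace ℝ (Fin n) → EuclideanSpace ℝ (Fin n)),
        Measurable n₁ → Measurable n₂ → Measurable ν₁ → Measurable ν₂ →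
        Measurable w → Measurable ω →
        (∀ x, lb ≤ n₁ x ∧ n₁ x ≤ ub) → (∀ x, lb ≤ n₂ x ∧ n₂ x ≤ ub) →
        (∀ x, 0 ≤ ν₁ x) → (∀ x, 0 ≤ ν₂ x) →
        (∀ᵐ x ∂(volume : Measure (EuclideanSpace ℝ (Fin n))),
          0 < m₁ * ν₁ x + m₂ * ν₂ x) →
        (∫⁻ x, ENNReal.ofReal
            (relEntDens n m₁ m₂ γ₁ γ₂ (n₁ x) (n₂ x) (ν₁ x) (ν₂ x) (w x) (ω x))) < ⊤ →
        (∫⁻ x, ENNReal.ofReal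
            (∑ i : Fin n, tripNorm
              (relFluxCol n m₁ m₂ γ₁ γ₂ i (n₁ x) (n₂ x) (ν₁ x) (ν₂ x) (w x) (ω x)))) ≤
          ENNReal.ofReal C *
            ∫⁻ x, ENNReal.ofReal
              (relEntDens n m₁ m₂ γ₁ γ₂ (n₁ x) (n₂ x) (ν₁ x) (ν₂ x) (w x) (ω x)) := by
  obtain ⟨C, hC, hpt⟩ := pointwise_bound n hn m₁ m₂ γ₁ γ₂ lb ub hm₁ hm₂ hγ₁ hγ₁' hγ₂ hγ₂' hlb hlu
  refine ⟨C, hC, ?_⟩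
  intro n₁ n₂ ν₁ ν₂ w ω _ _ _ _ _ _ hb₁ hb₂ hν₁ hν₂ hae _
  calc (∫⁻ x, ENNReal.ofReal
          (∑ i : Fin n, tripNorm
            (relFluxCol n m₁ m₂ γ₁ γ₂ i (n₁ x) (n₂ x) (ν₁ x) (ν₂ x) (w x) (ω x))))
      ≤ ∫⁻ x, ENNReal.ofReal
          (C * relEntDens n m₁ m₂ γ₁ γ₂ (n₁ x) (n₂ x) (ν₁ x) (ν₂ x) (w x) (ω x)) := by
        apply lintegral_mono_ae
        filter_upwards [hae] with x hx
        exact ENNReal.ofReal_le_ofReal (hpt (n₁ x) (n₂ x) (ν₁ x) (ν₂ x) (w x) (ω x)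
          (hb₁ x).1 (hb₁ x).2 (hb₂ x).1 (hb₂ x).2 (hν₁ x) (hν₂ x) hx)
    _ = ∫⁻ x, ENNReal.ofReal C * ENNReal.ofReal
          (relEntDens n m₁ m₂ γ₁ γ₂ (n₁ x) (n₂ x) (ν₁ x) (ν₂ x) (w x) (ω x)) := by
        simp_rw [ENNReal.ofReal_mul hC.le]
    _ = ENNReal.ofReal C * ∫⁻ x, ENNReal.ofReal
          (relEntDens n m₁ m₂ γ₁ γ₂ (n₁ x) (n₂ x) (ν₁ x) (ν₂ x) (w x) (ω x)) :=
        lintegral_const_mul' _ _ ENNReal.ofReal_ne_top
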